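/- arXiv:1707.07260 — 2 statements merged into one kernel-verified Lean document; each statement's English description precedes it below -/
import Mathlib

section
/- For every (D,μ) ∈ O_M and every integer k, the boundary value problem −(D(y)u′(y))′ + (μ(y) + λ_k² D(y))u(y) = 0 on (0,H), u(0) = 0, u(H) = 1 has a unique solution u_k ∈ C²([0,H]); moreover there exists a constant b > 0, depending only on (μ_0, D_0, M, L, H, k), such that ‖u_k‖_{C²([0,H])} ≤ b for every (D,μ) ∈ O_M. -/
/-- sup-norm (C⁰ norm) on [0,H] -/
noncomputable def cNorm0 (H : ℝ) (f : ℝ → ℝ) : ℝ :=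
  sSup ((fun y => |f y|) '' Set.Icc 0 H)

/-- C¹ norm on [0,H] -/
noncomputable def cNorm1 (H : ℝ) (f : ℝ → ℝ) : ℝ :=
  cNorm0 H f + cNorm0 H (deriv f)

/-- C² norm on [0,H] -/
noncomputable def cNorm2 (H : ℝ) (f : ℝ → ℝ) : ℝ :=
  cNorm1 H f + cNorm0 H (deriv (deriv f))

/-- membership of the pair (D, μ) in the admissible set O_M -/
def InOM (H D0 mu0 M : ℝ) (D mu : ℝ → ℝ) : Prop :=
  ContDiff ℝ 3 D ∧ ContDiff ℝ 3 mu ∧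
  (∀ y ∈ Set.Icc (0 : ℝ) H, D0 < D y) ∧
  (∀ y ∈ Set.Icc (0 : ℝ) H, mu0 < mu y) ∧
  (∀ i ≤ 3, ∀ y ∈ Set.Icc (0 : ℝ) H, |iteratedDeriv i D y| ≤ M) ∧
  (∀ i ≤ 3, ∀ y ∈ Set.Icc (0 : ℝ) H, |iteratedDeriv i mu y| ≤ M)

/-- λ_k = 2kπ/L -/
noncomputable def lamk (L : ℝ) (k : ℤ) : ℝ := 2 * (k : ℝ) * Real.pi / L

/-- u is a solution of −(D u′)′ + (μ + λ_k² D) u = 0 on (0,H), u(0)=0, u(H)=1 -/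
noncomputable def IsSol (H L : ℝ) (k : ℤ) (D mu u : ℝ → ℝ) : Prop :=
  ContDiff ℝ 2 u ∧ u 0 = 0 ∧ u H = 1 ∧
  ∀ y ∈ Set.Ioo (0 : ℝ) H,
    -(deriv (fun z => D z * deriv u z) y)
      + (mu y + (lamk L k) ^ 2 * D y) * u y = 0

/-- κ_m = min_{[0,H]} ( (√D)″/√D + μ/D + λ_k² ) -/
noncomputable def kapm (H L : ℝ) (k : ℤ) (D mu : ℝ → ℝ) : ℝ :=
  sInf ((fun y => deriv (deriv (fun z => Real.sqrt (D z))) y / Real.sqrt (D y)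
    + mu y / D y + (lamk L k) ^ 2) '' Set.Icc 0 H)

/-- κ_M = max_{[0,H]} ( (√D)″/√D + μ/D + λ_k² ) -/
noncomputable def kapM (H L : ℝ) (k : ℤ) (D mu : ℝ → ℝ) : ℝ :=
  sSup ((fun y => deriv (deriv (fun z => Real.sqrt (D z))) y / Real.sqrt (D y)
    + mu y / D y + (lamk L k) ^ 2) '' Set.Icc 0 H)

/-- the lower comparison function u̲_m -/
noncomputable def uLow (H L : ℝ) (k : ℤ) (D mu : ℝ → ℝ) (y : ℝ) : ℝ :=
  Real.sqrt (D H) / Real.sqrt (D y)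
    * (Real.sinh (Real.sqrt (kapm H L k D mu) * y)
        / Real.sinh (Real.sqrt (kapm H L k D mu) * H))

/-- the upper comparison function ū_M -/
noncomputable def uHigh (H L : ℝ) (k : ℤ) (D mu : ℝ → ℝ) (y : ℝ) : ℝ :=
  Real.sqrt (D H) / Real.sqrt (D y)
    * (Real.sinh (Real.sqrt (kapM H L k D mu) * y)
        / Real.sinh (Real.sqrt (kapM H L k D mu) * H))



open Set Filter MeasureTheory intervalIntegral
open scoped NNReal Topology

section auxODE

variable {E : Type*} [NormedAddCommGroup E] [NormedSpace ℝ E]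

private lemma glueSol (f : ℝ → E → E) {a b c : ℝ} (hab : a ≤ b) (hbc : b ≤ c)
    {x y : ℝ → E} (hxy : x b = y b)
    (hx : ∀ t ∈ Icc a b, HasDerivWithinAt x (f t (x t)) (Icc a b) t)
    (hy : ∀ t ∈ Icc b c, HasDerivWithinAt y (f t (y t)) (Icc b c) t) :
    ∃ z : ℝ → E, (∀ t ∈ Icc a b, z t = x t) ∧
      ∀ t ∈ Icc a c, HasDerivWithinAt z (f t (z t)) (Icc a c) t := by
  classical
  refine ⟨fun t => if t ≤ b then x t else y t, ?_, ?_⟩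
  case _ =>
    intro t ht; exact if_pos ht.2
  have hzx : ∀ t ∈ Icc a b, (fun t => if t ≤ b then x t else y t) t = x t := by
    intro t ht; exact if_pos ht.2
  have hzy : ∀ t ∈ Icc b c, (fun t => if t ≤ b then x t else y t) t = y t := by
    intro t ht
    by_cases h : t ≤ b
    · have : t = b := le_antisymm h ht.1
      simp [this, hxy]
    · simp [h]
  intro t ht
  rcases lt_trichotomy t b with hlt | heqq | hgt
  · have htab : t ∈ Icc a b := ⟨ht.1, hlt.le⟩
    have h1 : HasDerivWithinAt (fun t => if t ≤ b then x t else y t)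
        (f t ((fun t => if t ≤ b then x t else y t) t)) (Icc a b) t := by
      rw [hzx t htab]
      exact (hx t htab).congr hzx (hzx t htab)
    exact h1.mono_of_mem_nhdsWithin
      (mem_nhdsWithin.mpr ⟨Iio b, isOpen_Iio, hlt, fun s hs => ⟨hs.2.1, hs.1.le⟩⟩)
  · subst heqq
    have h1 : HasDerivWithinAt (fun t' => if t' ≤ t then x t' else y t')
        (f t ((fun t' => if t' ≤ t then x t' else y t') t)) (Icc a t) t := by
      rw [hzx t ⟨hab, le_refl t⟩]
      exact (hx t ⟨hab, le_refl t⟩).congr hzx (hzx t ⟨hab, le_refl t⟩)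
    have h2 : HasDerivWithinAt (fun t' => if t' ≤ t then x t' else y t')
        (f t ((fun t' => if t' ≤ t then x t' else y t') t)) (Icc t c) t := by
      rw [hzx t ⟨hab, le_refl t⟩, hxy]
      exact (hy t ⟨le_refl t, hbc⟩).congr hzy (hzy t ⟨le_refl t, hbc⟩)
    have := h1.union h2
    rwa [Icc_union_Icc_eq_Icc hab hbc] at this
  · have htbc : t ∈ Icc b c := ⟨hgt.le, ht.2⟩
    have h1 : HasDerivWithinAt (fun t => if t ≤ b then x t else y t)
        (f t ((fun t => if t ≤ b then x t else y t) t)) (Icc b c) t := by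
      rw [hzy t htbc]
      exact (hy t htbc).congr hzy (hzy t htbc)
    exact h1.mono_of_mem_nhdsWithin
      (mem_nhdsWithin.mpr ⟨Ioi b, isOpen_Ioi, hgt, fun s hs => ⟨hs.1.le, hs.2.2⟩⟩)

private lemma plStep [CompleteSpace E] (f : ℝ → E → E) (K : ℝ≥0)
    (hlip : ∀ t, LipschitzWith K (f t))
    (hcont : ∀ x, Continuous fun t => f t x)
    (hf0 : ∀ t, f t 0 = 0)
    {s s' t0 : ℝ} (hs : t0 ∈ Icc s s') (hlen : s' - s ≤ 1 / (2 * K + 2)) (z : E) :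
    ∃ y : ℝ → E, y t0 = z ∧ ∀ t ∈ Icc s s', HasDerivWithinAt y (f t (y t)) (Icc s s') t := by
  have hK0 : (0:ℝ) ≤ (K : ℝ) := K.coe_nonneg
  have hpl : IsPicardLindelof f (⟨t0, hs⟩ : Icc s s') z (‖z‖₊ + 1) 0 (K * (2 * ‖z‖₊ + 1)) K := by
    constructor
    · exact fun t _ => (hlip t).lipschitzOnWith
    · exact fun x _ => (hcont x).continuousOn
    · intro t _ x hx
      have h1 : ‖f t x‖ ≤ (K:ℝ) * ‖x‖ := by
        have := (hlip t).dist_le_mul x 0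
        simpa [hf0 t, dist_eq_norm] using this
      have h2 : ‖x - z‖ ≤ ‖z‖ + 1 := by
        have := mem_closedBall_iff_norm.mp hx
        push_cast [coe_nnnorm] at this
        exact this
      have h3 : ‖x‖ ≤ 2 * ‖z‖ + 1 := by
        have : ‖x‖ ≤ ‖x - z‖ + ‖z‖ := by
          simpa using norm_add_le (x - z) z
        linarith
      push_cast [coe_nnnorm]
      calc ‖f t x‖ ≤ (K:ℝ) * ‖x‖ := h1
        _ ≤ (K:ℝ) * (2 * ‖z‖ + 1) := by nlinarith
    · push_cast [coe_nnnorm]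
      have hmax : max (s' - t0) (t0 - s) ≤ s' - s :=
        max_le (by linarith [hs.1]) (by linarith [hs.2])
      have h2K : (0:ℝ) < 2 * (K:ℝ) + 2 := by positivity
      have h1 : (K:ℝ) * (2 * ‖z‖ + 1) * max (s' - t0) (t0 - s)
          ≤ (K:ℝ) * (2 * ‖z‖ + 1) * (1 / (2 * (K:ℝ) + 2)) := by
        apply mul_le_mul_of_nonneg_left (hmax.trans hlen)
        positivity
      refine h1.trans ?_
      rw [mul_one_div, div_le_iff₀ h2K]
      nlinarith [norm_nonneg z]
  exact hpl.exists_eq_forall_mem_Icc_hasDerivWithinAt₀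

end auxODE

section auxODE2

variable {E : Type*} [NormedAddCommGroup E] [NormedSpace ℝ E]

private lemma chainForward [CompleteSpace E] (f : ℝ → E → E) (K : ℝ≥0)
    (hlip : ∀ t, LipschitzWith K (f t))
    (hcont : ∀ x, Continuous fun t => f t x)
    (hf0 : ∀ t, f t 0 = 0) (x₀ : E) :
    ∀ n : ℕ, ∃ x : ℝ → E, x 0 = x₀ ∧
      ∀ t ∈ Icc (0:ℝ) ((n:ℝ) * (1 / (2 * (K:ℝ) + 2))),
        HasDerivWithinAt x (f t (x t)) (Icc (0:ℝ) ((n:ℝ) * (1 / (2 * (K:ℝ) + 2)))) t := by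
  have hh : (0:ℝ) < 1 / (2 * (K:ℝ) + 2) := by positivity
  intro n
  induction n with
  | zero =>
    obtain ⟨y, hy0, hy⟩ := plStep f K hlip hcont hf0
      (s := 0) (s' := 0) (t0 := 0) ⟨le_refl _, le_refl _⟩ (by simpa using hh.le) x₀
    refine ⟨y, hy0, ?_⟩
    intro t ht
    have h0 : ((0:ℕ) : ℝ) * (1 / (2 * (K:ℝ) + 2)) = 0 := by norm_num
    rw [h0] at ht ⊢
    exact hy t ht
  | succ n ih =>
    obtain ⟨x, hx0, hx⟩ := ih
    have hnn : (0:ℝ) ≤ (n : ℝ) * (1 / (2 * (K:ℝ) + 2)) := by positivity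
    have hstep : ((n:ℝ) + 1) * (1 / (2 * (K:ℝ) + 2)) - (n : ℝ) * (1 / (2 * (K:ℝ) + 2))
        = 1 / (2 * (K:ℝ) + 2) := by ring
    obtain ⟨y, hy0, hy⟩ := plStep f K hlip hcont hf0
      (s := (n : ℝ) * (1 / (2 * (K:ℝ) + 2))) (s' := ((n:ℝ) + 1) * (1 / (2 * (K:ℝ) + 2)))
      (t0 := (n : ℝ) * (1 / (2 * (K:ℝ) + 2)))
      ⟨le_refl _, by nlinarith⟩ (le_of_eq hstep) (x ((n : ℝ) * (1 / (2 * (K:ℝ) + 2))))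
    obtain ⟨z, hz1, hz⟩ := glueSol f (a := 0) (b := (n : ℝ) * (1 / (2 * (K:ℝ) + 2)))
      (c := ((n:ℝ) + 1) * (1 / (2 * (K:ℝ) + 2))) hnn (by nlinarith) hy0.symm hx hy
    refine ⟨z, ?_, ?_⟩
    · rw [hz1 0 ⟨le_refl _, hnn⟩, hx0]
    · intro t ht
      have hcast : ((n + 1 : ℕ) : ℝ) = (n : ℝ) + 1 := by push_cast; ring
      rw [hcast] at ht ⊢
      exact hz t ht

private lemma solOnIcc [CompleteSpace E] (f : ℝ → E → E) (K : ℝ≥0)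
    (hlip : ∀ t, LipschitzWith K (f t))
    (hcont : ∀ x, Continuous fun t => f t x)
    (hf0 : ∀ t, f t 0 = 0) {a b : ℝ} (ha : a ≤ 0) (hb : 0 ≤ b) (x₀ : E) :
    ∃ x : ℝ → E, x 0 = x₀ ∧ ∀ t ∈ Icc a b, HasDerivWithinAt x (f t (x t)) (Icc a b) t := by
  have hh : (0:ℝ) < 1 / (2 * (K:ℝ) + 2) := by positivity
  obtain ⟨n, hn⟩ := exists_nat_ge (b / (1 / (2 * (K:ℝ) + 2)))
  rw [div_le_iff₀ hh] at hn
  obtain ⟨xf, hxf0, hxf⟩ := chainForward f K hlip hcont hf0 x₀ n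
  set g : ℝ → E → E := fun t v => -f (-t) v with hgdef
  have hglip : ∀ t, LipschitzWith K (g t) := by
    intro t
    apply LipschitzWith.of_dist_le_mul
    intro p q
    have := (hlip (-t)).dist_le_mul p q
    simpa [g, dist_neg_neg] using this
  have hgcont : ∀ x, Continuous fun t => g t x := fun x =>
    ((hcont x).comp continuous_neg).neg
  have hg0 : ∀ t, g t 0 = 0 := by simp [g, hf0]
  obtain ⟨m, hm⟩ := exists_nat_ge ((-a) / (1 / (2 * (K:ℝ) + 2)))
  rw [div_le_iff₀ hh] at hm
  obtain ⟨xb', hxb'0, hxb'⟩ := chainForward g K hglip hgcont hg0 x₀ m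
  have hxb : ∀ t ∈ Icc (-((m:ℝ) * (1 / (2 * (K:ℝ) + 2)))) 0,
      HasDerivWithinAt (fun t => xb' (-t)) (f t (xb' (-t)))
        (Icc (-((m:ℝ) * (1 / (2 * (K:ℝ) + 2)))) 0) t := by
    intro t ht
    have hmem : -t ∈ Icc (0:ℝ) ((m:ℝ) * (1 / (2 * (K:ℝ) + 2))) :=
      ⟨by linarith [ht.2], by linarith [ht.1]⟩
    have h1 := hxb' (-t) hmem
    have hneg : HasDerivWithinAt (fun s : ℝ => -s) (-1)
        (Icc (-((m:ℝ) * (1 / (2 * (K:ℝ) + 2)))) 0) t := (hasDerivAt_neg t).hasDerivWithinAt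
    have hmaps : MapsTo (fun s : ℝ => -s) (Icc (-((m:ℝ) * (1 / (2 * (K:ℝ) + 2)))) 0)
        (Icc (0:ℝ) ((m:ℝ) * (1 / (2 * (K:ℝ) + 2)))) := by
      intro s hs
      simp only [mem_Icc] at hs ⊢
      constructor
      · linarith [hs.2]
      · linarith [hs.1]
    have h2 := h1.scomp t hneg hmaps
    simp only [Function.comp_def] at h2
    have heq : (-1 : ℝ) • g (-t) (xb' (-t)) = f t (xb' (-t)) := by
      simp [g, neg_neg, smul_neg, neg_one_smul]
    rwa [heq] at h2
  obtain ⟨z, hz1, hz⟩ := glueSol f (a := -((m:ℝ) * (1 / (2 * (K:ℝ) + 2)))) (b := 0)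
    (c := (n:ℝ) * (1 / (2 * (K:ℝ) + 2))) (neg_nonpos.mpr (by positivity)) (by positivity)
    (show (fun t => xb' (-t)) 0 = xf 0 by simp [hxb'0, hxf0]) hxb hxf
  refine ⟨z, ?_, ?_⟩
  · rw [hz1 0 ⟨neg_nonpos.mpr (by positivity), le_refl _⟩]
    simp [hxb'0]
  · intro t ht
    have hsub : Icc a b ⊆ Icc (-((m:ℝ) * (1 / (2 * (K:ℝ) + 2)))) ((n:ℝ) * (1 / (2 * (K:ℝ) + 2))) :=
      Icc_subset_Icc (by linarith) (by linarith)
    exact (hz t (hsub ht)).mono hsub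

end auxODE2

private lemma maxPrinciple {H : ℝ} (hH : 0 < H) (D c w : ℝ → ℝ)
    (hDpos : ∀ y ∈ Icc (0:ℝ) H, 0 < D y)
    (hwc : ContinuousOn w (Icc 0 H))
    (hw' : ∀ y ∈ Ioo (0:ℝ) H, DifferentiableAt ℝ w y)
    (hg' : ∀ y ∈ Ioo (0:ℝ) H, DifferentiableAt ℝ (fun z => D z * deriv w z) y)
    (hc : ∀ y ∈ Ioo (0:ℝ) H, 0 < c y)
    (heq : ∀ y ∈ Ioo (0:ℝ) H, c y * w y ≤ deriv (fun z => D z * deriv w z) y)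
    (h0 : w 0 ≤ 0) (hHH : w H ≤ 0) :
    ∀ y ∈ Icc (0:ℝ) H, w y ≤ 0 := by
  by_contra hcon
  push_neg at hcon
  obtain ⟨y₀, hy₀, hmax⟩ := (isCompact_Icc : IsCompact (Icc (0:ℝ) H)).exists_isMaxOn
    (nonempty_Icc.mpr hH.le) hwc
  obtain ⟨yb, hyb, hwyb⟩ := hcon
  have hw0 : 0 < w y₀ := lt_of_lt_of_le hwyb (hmax hyb)
  have hy₀0 : y₀ ≠ 0 := by rintro rfl; linarith
  have hy₀H : y₀ ≠ H := by rintro rfl; linarith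
  have hy₀I : y₀ ∈ Ioo (0:ℝ) H :=
    ⟨lt_of_le_of_ne hy₀.1 (Ne.symm hy₀0), lt_of_le_of_ne hy₀.2 hy₀H⟩
  have hloc : IsLocalMax w y₀ := hmax.isLocalMax (Icc_mem_nhds hy₀I.1 hy₀I.2)
  have hder0 : deriv w y₀ = 0 := hloc.deriv_eq_zero
  have hg0 : D y₀ * deriv w y₀ = 0 := by rw [hder0]; ring
  have hgpos : 0 < deriv (fun z => D z * deriv w z) y₀ :=
    lt_of_lt_of_le (mul_pos (hc y₀ hy₀I) hw0) (heq y₀ hy₀I)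
  have hgd : HasDerivAt (fun z => D z * deriv w z) (deriv (fun z => D z * deriv w z) y₀) y₀ :=
    (hg' y₀ hy₀I).hasDerivAt
  have hslope := hasDerivAt_iff_tendsto_slope.mp hgd
  have hev1 : ∀ᶠ z in 𝓝[≠] y₀, 0 < slope (fun z => D z * deriv w z) y₀ z :=
    hslope.eventually (eventually_gt_nhds hgpos)
  have hev : ∀ᶠ z in 𝓝[>] y₀, 0 < slope (fun z => D z * deriv w z) y₀ z :=
    hev1.filter_mono (nhdsWithin_mono y₀ (fun z hz => ne_of_gt hz))
  have hev2 : ∀ᶠ z in 𝓝[>] y₀, z < H :=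
    eventually_of_mem (Ioo_mem_nhdsGT_of_mem ⟨le_refl y₀, hy₀I.2⟩) (fun z hz => hz.2)
  obtain ⟨u', hu', hsub⟩ := mem_nhdsGT_iff_exists_Ioo_subset.mp (hev.and hev2)
  set y₁ := (y₀ + min u' H) / 2 with hy₁def
  have hy₀u : y₀ < min u' H := lt_min hu' hy₀I.2
  have hy₁mem : y₁ ∈ Ioo y₀ u' := by
    constructor
    · rw [hy₁def]; linarith
    · rw [hy₁def]; have := min_le_left u' H; linarith
  have hy₁H : y₁ < H := by
    rw [hy₁def]; have := min_le_right u' H; linarith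
  have hy₁0 : 0 < y₁ := lt_trans hy₀I.1 hy₁mem.1
  have hwcont : ContinuousOn w (Icc y₀ y₁) :=
    hwc.mono (Icc_subset_Icc hy₀.1 hy₁H.le)
  have hwderiv : ∀ z ∈ Ioo y₀ y₁, HasDerivAt w (deriv w z) z := fun z hz =>
    (hw' z ⟨lt_trans hy₀I.1 hz.1, lt_trans hz.2 hy₁H⟩).hasDerivAt
  obtain ⟨η, hη, hηs⟩ := exists_hasDerivAt_eq_slope w (deriv w) hy₁mem.1 hwcont hwderiv
  have hηIoo : η ∈ Ioo y₀ u' := ⟨hη.1, lt_trans hη.2 hy₁mem.2⟩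
  have hgη : 0 < D η * deriv w η := by
    have hsl := (hsub hηIoo).1
    rw [slope_def_field, hg0, sub_zero] at hsl
    have hpos : 0 < η - y₀ := sub_pos.mpr hη.1
    have := mul_pos hsl hpos
    rwa [div_mul_cancel₀] at this
    exact ne_of_gt hpos
  have hDη : 0 < D η := hDpos η ⟨(lt_trans hy₀I.1 hη.1).le, (lt_trans hη.2 hy₁H).le⟩
  have hwη : 0 < deriv w η := by
    by_contra hcon2
    push_neg at hcon2
    have : D η * deriv w η ≤ 0 := mul_nonpos_of_nonneg_of_nonpos hDη.le hcon2
    linarith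
  have hwy₁ : w y₀ < w y₁ := by
    have hpos : 0 < y₁ - y₀ := sub_pos.mpr hy₁mem.1
    rw [hηs] at hwη
    have := mul_pos hwη hpos
    rw [div_mul_cancel₀ _ (ne_of_gt hpos)] at this
    linarith
  exact absurd (hmax ⟨hy₁0.le, hy₁H.le⟩) (not_le.mpr hwy₁)

private lemma exists_phi (H : ℝ) (hH : 0 < H) :
    ∃ φ : ℝ → ℝ, ContDiff ℝ 2 φ ∧ (∀ y ∈ Icc (-(1:ℝ)/2) (H + 1/2), φ y = y) ∧
      ∀ y, φ y ∈ Ioo (-1 : ℝ) (H + 1) := by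
  have hb1 : (0:ℝ) < H/2 + 1/2 := by linarith
  have hb2 : H/2 + 1/2 < H/2 + 3/4 := by linarith
  set χb : ContDiffBump (H/2) := ⟨H/2 + 1/2, H/2 + 3/4, hb1, hb2⟩ with hχbdef
  have hχcont : Continuous fun t : ℝ => χb t := χb.continuous
  have hχ1 : ∀ t ∈ Icc (-(1:ℝ)/2) (H + 1/2), χb t = 1 := by
    intro t ht
    apply χb.one_of_mem_closedBall
    rw [Real.closedBall_eq_Icc]
    refine ⟨?_, ?_⟩
    · have h := ht.1
      simp only [hχbdef]
      linarith
    · have h := ht.2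
      simp only [hχbdef]
      linarith
  have hχ0r : ∀ t : ℝ, H + 3/4 ≤ t → χb t = 0 := by
    intro t ht
    apply Function.notMem_support.mp
    rw [χb.support_eq, Real.ball_eq_Ioo]
    intro hmem
    have := hmem.2
    simp only [hχbdef] at this
    linarith
  have hχ0l : ∀ t : ℝ, t ≤ -(3:ℝ)/4 → χb t = 0 := by
    intro t ht
    apply Function.notMem_support.mp
    rw [χb.support_eq, Real.ball_eq_Ioo]
    intro hmem
    have := hmem.1
    simp only [hχbdef] at this
    linarith
  have hint : ∀ a b : ℝ, IntervalIntegrable (fun t : ℝ => χb t) volume a b :=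
    fun a b => hχcont.intervalIntegrable a b
  set φ : ℝ → ℝ := fun y => ∫ t in (0:ℝ)..y, χb t with hφdef
  have hder : ∀ y, HasDerivAt φ (χb y) y := by
    intro y
    exact (intervalIntegral.integral_hasStrictDerivAt_right (hint 0 y)
      (hχcont.stronglyMeasurableAtFilter _ _) hχcont.continuousAt).hasDerivAt
  have hφdiff : Differentiable ℝ φ := fun y => (hder y).differentiableAt
  have hφderiv : deriv φ = fun t : ℝ => χb t := funext fun y => (hder y).deriv
  have hφC2 : ContDiff ℝ 2 φ := by
    rw [show (2 : WithTop ℕ∞) = 1 + 1 by norm_num, contDiff_succ_iff_deriv]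
    refine ⟨hφdiff, by simp, ?_⟩
    rw [hφderiv]
    exact χb.contDiff
  have hid : ∀ y ∈ Icc (-(1:ℝ)/2) (H + 1/2), φ y = y := by
    intro y hy
    have hsub : uIcc (0:ℝ) y ⊆ Icc (-(1:ℝ)/2) (H + 1/2) :=
      uIcc_subset_Icc ⟨by linarith, by linarith⟩ hy
    calc φ y = ∫ t in (0:ℝ)..y, (1:ℝ) :=
          intervalIntegral.integral_congr (fun t ht => hχ1 t (hsub ht))
      _ = y := by simp
  have hfwd : ∀ y : ℝ, 0 ≤ y → φ y ≤ H + 3/4 := by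
    intro y hy
    rcases le_or_gt y (H + 3/4) with h | h
    · calc φ y ≤ ∫ t in (0:ℝ)..y, (1:ℝ) := by
            apply intervalIntegral.integral_mono_on hy (hint 0 y)
              intervalIntegrable_const (fun t _ => χb.le_one)
        _ = y := by simp
        _ ≤ H + 3/4 := h
    · have hsplit : (∫ t in (0:ℝ)..(H+3/4), χb t) + ∫ t in (H+3/4)..y, χb t = φ y :=
        intervalIntegral.integral_add_adjacent_intervals (hint _ _) (hint _ _)
      have h2 : (∫ t in (H+3/4)..y, χb t) = 0 := by
        rw [intervalIntegral.integral_congr (g := fun _ => (0:ℝ)) ?_]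
        · simp
        · intro t ht
          rw [uIcc_of_le h.le] at ht
          exact hχ0r t ht.1
      have h3 : (∫ t in (0:ℝ)..(H+3/4), χb t) ≤ H + 3/4 := by
        calc (∫ t in (0:ℝ)..(H+3/4), χb t) ≤ ∫ t in (0:ℝ)..(H+3/4), (1:ℝ) := by
              apply intervalIntegral.integral_mono_on (by linarith) (hint _ _)
                intervalIntegrable_const (fun t _ => χb.le_one)
          _ = H + 3/4 := by simp
      linarith
  have hbwd : ∀ y : ℝ, y < 0 → -(3:ℝ)/4 ≤ φ y := by
    intro y hy
    have hφsym : φ y = -∫ t in y..(0:ℝ), χb t := by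
      rw [hφdef]
      exact (intervalIntegral.integral_symm y 0) 
    rcases le_or_gt (-(3:ℝ)/4) y with h | h
    · have : (∫ t in y..(0:ℝ), χb t) ≤ ∫ t in y..(0:ℝ), (1:ℝ) :=
        intervalIntegral.integral_mono_on hy.le (hint _ _)
          intervalIntegrable_const (fun t _ => χb.le_one)
      have h1 : (∫ t in y..(0:ℝ), (1:ℝ)) = -y := by simp
      rw [hφsym]
      rw [h1] at this
      linarith
    · have hsplit : (∫ t in y..(-(3:ℝ)/4), χb t) + ∫ t in (-(3:ℝ)/4)..(0:ℝ), χb t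
          = ∫ t in y..(0:ℝ), χb t :=
        intervalIntegral.integral_add_adjacent_intervals (hint _ _) (hint _ _)
      have h2 : (∫ t in y..(-(3:ℝ)/4), χb t) = 0 := by
        rw [intervalIntegral.integral_congr (g := fun _ => (0:ℝ)) ?_]
        · simp
        · intro t ht
          rw [uIcc_of_le h.le] at ht
          exact hχ0l t ht.2
      have h3 : (∫ t in (-(3:ℝ)/4)..(0:ℝ), χb t) ≤ 3/4 := by
        calc (∫ t in (-(3:ℝ)/4)..(0:ℝ), χb t) ≤ ∫ t in (-(3:ℝ)/4)..(0:ℝ), (1:ℝ) := by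
              apply intervalIntegral.integral_mono_on (by norm_num) (hint _ _)
                intervalIntegrable_const (fun t _ => χb.le_one)
          _ = 3/4 := by norm_num
      rw [hφsym]
      linarith
  have hnn : ∀ y : ℝ, 0 ≤ y → 0 ≤ φ y := fun y hy =>
    intervalIntegral.integral_nonneg hy (fun t _ => χb.nonneg)
  have hnp : ∀ y : ℝ, y < 0 → φ y ≤ 0 := by
    intro y hy
    have hφsym : φ y = -∫ t in y..(0:ℝ), χb t := intervalIntegral.integral_symm y 0
    rw [hφsym]
    have : 0 ≤ ∫ t in y..(0:ℝ), χb t :=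
      intervalIntegral.integral_nonneg hy.le (fun t _ => χb.nonneg)
    linarith
  refine ⟨φ, hφC2, hid, fun y => ⟨?_, ?_⟩⟩
  · rcases le_or_gt 0 y with h | h
    · have := hnn y h; linarith
    · have := hbwd y h; linarith
  · rcases le_or_gt 0 y with h | h
    · have := hfwd y h; linarith
    · have := hnp y h; linarith

private lemma sol_le_one (H L D0 mu0 M : ℝ) (k : ℤ) (hH : 0 < H) (hD0 : 0 < D0)
    (hmu0 : 0 < mu0) {D mu u : ℝ → ℝ} (hOM : InOM H D0 mu0 M D mu)
    (hu : IsSol H L k D mu u) : ∀ y ∈ Icc (0:ℝ) H, 0 ≤ u y ∧ u y ≤ 1 := by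
  obtain ⟨hD3, hmu3, hDpos, hmupos, hDb, hmub⟩ := hOM
  obtain ⟨hu2, hu0, huH, hueq⟩ := hu
  have hDpos' : ∀ y ∈ Icc (0:ℝ) H, 0 < D y := fun y hy => lt_trans hD0 (hDpos y hy)
  have hcpos : ∀ y ∈ Ioo (0:ℝ) H, 0 < mu y + (lamk L k)^2 * D y := by
    intro y hy
    have h1 := hmupos y (Ioo_subset_Icc_self hy)
    have h2 := hDpos' y (Ioo_subset_Icc_self hy)
    nlinarith [sq_nonneg (lamk L k)]
  have hDdiff : Differentiable ℝ D := hD3.differentiable (by norm_num)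
  have hudiff : Differentiable ℝ u := hu2.differentiable (by norm_num)
  have hud1 : ContDiff ℝ 1 (deriv u) := by
    rw [show (2 : WithTop ℕ∞) = 1 + 1 by norm_num] at hu2
    exact (contDiff_succ_iff_deriv.mp hu2).2.2
  have hudd : Differentiable ℝ (deriv u) := hud1.differentiable one_ne_zero
  have heq' : ∀ y ∈ Ioo (0:ℝ) H,
      deriv (fun z => D z * deriv u z) y = (mu y + (lamk L k)^2 * D y) * u y := by
    intro y hy
    have := hueq y hy
    linarith
  have hucont : ContinuousOn u (Icc 0 H) := hudiff.continuous.continuousOn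
  have hup : ∀ y ∈ Icc (0:ℝ) H, u y - 1 ≤ 0 := by
    apply maxPrinciple hH D (fun y => mu y + (lamk L k)^2 * D y) (fun y => u y - 1) hDpos'
      (hucont.sub continuousOn_const)
      (fun y _ => (hudiff y).sub_const 1) ?_ hcpos ?_ (by norm_num [hu0])
      (by norm_num [huH])
    · intro y hy
      have hfun : (fun z => D z * deriv (fun t => u t - 1) z) = fun z => D z * deriv u z :=
        funext fun z => by rw [deriv_sub_const]
      rw [hfun]
      exact (hDdiff y).mul (hudd y)
    · intro y hy
      have hfun : (fun z => D z * deriv (fun t => u t - 1) z) = fun z => D z * deriv u z :=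
        funext fun z => by rw [deriv_sub_const]
      rw [hfun, heq' y hy]
      have := hcpos y hy
      nlinarith
  have hlo : ∀ y ∈ Icc (0:ℝ) H, -u y ≤ 0 := by
    apply maxPrinciple hH D (fun y => mu y + (lamk L k)^2 * D y) (fun y => -u y) hDpos'
      hucont.neg (fun y _ => (hudiff y).neg) ?_ hcpos ?_ (by norm_num [hu0])
      (by norm_num [huH])
    · intro y hy
      have hfun : (fun z => D z * deriv (fun t => -u t) z) = fun z => -(D z * deriv u z) :=
        funext fun z => by rw [deriv.fun_neg, mul_neg]
      rw [hfun]
      exact ((hDdiff y).mul (hudd y)).neg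
    · intro y hy
      have hfun : (fun z => D z * deriv (fun t => -u t) z) = fun z => -(D z * deriv u z) :=
        funext fun z => by rw [deriv.fun_neg, mul_neg]
      rw [hfun, deriv.fun_neg, heq' y hy]
      apply le_of_eq
      ring
  intro y hy
  exact ⟨by linarith [hlo y hy], by linarith [hup y hy]⟩

private lemma sol_unique (H L D0 mu0 M : ℝ) (k : ℤ) (hH : 0 < H) (hD0 : 0 < D0)
    (hmu0 : 0 < mu0) {D mu u v : ℝ → ℝ} (hOM : InOM H D0 mu0 M D mu)
    (hu : IsSol H L k D mu u) (hv : IsSol H L k D mu v) :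
    Set.EqOn u v (Icc (0:ℝ) H) := by
  obtain ⟨hD3, hmu3, hDpos, hmupos, hDb, hmub⟩ := hOM
  obtain ⟨hu2, hu0, huH, hueq⟩ := hu
  obtain ⟨hv2, hv0, hvH, hveq⟩ := hv
  have hDpos' : ∀ y ∈ Icc (0:ℝ) H, 0 < D y := fun y hy => lt_trans hD0 (hDpos y hy)
  have hcpos : ∀ y ∈ Ioo (0:ℝ) H, 0 < mu y + (lamk L k)^2 * D y := by
    intro y hy
    have h1 := hmupos y (Ioo_subset_Icc_self hy)
    have h2 := hDpos' y (Ioo_subset_Icc_self hy)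
    nlinarith [sq_nonneg (lamk L k)]
  have hDdiff : Differentiable ℝ D := hD3.differentiable (by norm_num)
  have hudiff : Differentiable ℝ u := hu2.differentiable (by norm_num)
  have hvdiff : Differentiable ℝ v := hv2.differentiable (by norm_num)
  have hud1 : ContDiff ℝ 1 (deriv u) := by
    rw [show (2 : WithTop ℕ∞) = 1 + 1 by norm_num] at hu2
    exact (contDiff_succ_iff_deriv.mp hu2).2.2
  have hvd1 : ContDiff ℝ 1 (deriv v) := by
    rw [show (2 : WithTop ℕ∞) = 1 + 1 by norm_num] at hv2
    exact (contDiff_succ_iff_deriv.mp hv2).2.2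
  have hudd : Differentiable ℝ (deriv u) := hud1.differentiable one_ne_zero
  have hvdd : Differentiable ℝ (deriv v) := hvd1.differentiable one_ne_zero
  have heqU : ∀ y ∈ Ioo (0:ℝ) H,
      deriv (fun z => D z * deriv u z) y = (mu y + (lamk L k)^2 * D y) * u y := by
    intro y hy; have := hueq y hy; linarith
  have heqV : ∀ y ∈ Ioo (0:ℝ) H,
      deriv (fun z => D z * deriv v z) y = (mu y + (lamk L k)^2 * D y) * v y := by
    intro y hy; have := hveq y hy; linarith
  have hfun : (fun z => D z * deriv (fun t => u t - v t) z)
      = fun z => D z * deriv u z - D z * deriv v z :=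
    funext fun z => by rw [deriv_fun_sub (hudiff z) (hvdiff z)]; ring
  have hfun2 : (fun z => D z * deriv (fun t => v t - u t) z)
      = fun z => D z * deriv v z - D z * deriv u z :=
    funext fun z => by rw [deriv_fun_sub (hvdiff z) (hudiff z)]; ring
  have key : ∀ w₁ w₂ : ℝ → ℝ, ∀ _ : IsSol H L k D mu w₁, ∀ _ : IsSol H L k D mu w₂, True := by
    intro _ _ _ _; trivial
  have h1 : ∀ y ∈ Icc (0:ℝ) H, u y - v y ≤ 0 := by
    apply maxPrinciple hH D (fun y => mu y + (lamk L k)^2 * D y) (fun y => u y - v y) hDpos'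
      ((hudiff.continuous.continuousOn).sub (hvdiff.continuous.continuousOn))
      (fun y _ => (hudiff y).sub (hvdiff y)) ?_ hcpos ?_
      (by norm_num [hu0, hv0]) (by norm_num [huH, hvH])
    · intro y hy
      rw [hfun]
      exact ((hDdiff y).mul (hudd y)).sub ((hDdiff y).mul (hvdd y))
    · intro y hy
      rw [hfun, deriv_fun_sub (f := fun z => D z * deriv u z) (g := fun z => D z * deriv v z) ((hDdiff y).mul (hudd y)) ((hDdiff y).mul (hvdd y)),
        heqU y hy, heqV y hy]
      apply le_of_eq
      ring
  have h2 : ∀ y ∈ Icc (0:ℝ) H, v y - u y ≤ 0 := by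
    apply maxPrinciple hH D (fun y => mu y + (lamk L k)^2 * D y) (fun y => v y - u y) hDpos'
      ((hvdiff.continuous.continuousOn).sub (hudiff.continuous.continuousOn))
      (fun y _ => (hvdiff y).sub (hudiff y)) ?_ hcpos ?_
      (by norm_num [hu0, hv0]) (by norm_num [huH, hvH])
    · intro y hy
      rw [hfun2]
      exact ((hDdiff y).mul (hvdd y)).sub ((hDdiff y).mul (hudd y))
    · intro y hy
      rw [hfun2, deriv_fun_sub (f := fun z => D z * deriv v z) (g := fun z => D z * deriv u z) ((hDdiff y).mul (hvdd y)) ((hDdiff y).mul (hudd y)),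
        heqU y hy, heqV y hy]
      apply le_of_eq
      ring
  intro y hy
  have := h1 y hy
  have := h2 y hy
  linarith


private lemma abs_sub_le' (a b : ℝ) : |a - b| ≤ |a| + |b| := by
  rw [sub_eq_add_neg]
  exact (abs_add_le a (-b)).trans_eq (by rw [abs_neg])

private lemma cNorm0_le {H B : ℝ} {f : ℝ → ℝ} (hB : 0 ≤ B)
    (hf : ∀ y ∈ Icc (0:ℝ) H, |f y| ≤ B) : cNorm0 H f ≤ B := by
  apply Real.sSup_le _ hB
  rintro x ⟨y, hy, rfl⟩
  exact hf y hy

private lemma sol_bound (H L D0 mu0 M : ℝ) (k : ℤ) (hH : 0 < H) (hD0 : 0 < D0)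
    (hmu0 : 0 < mu0) (hM0 : 0 < M) {D mu u : ℝ → ℝ} (hOM : InOM H D0 mu0 M D mu)
    (hu : IsSol H L k D mu u) :
    cNorm2 H u ≤ 1 + (M / H + (M + (lamk L k)^2 * M) * H) / D0
      + ((M + (lamk L k)^2 * M) + M * ((M / H + (M + (lamk L k)^2 * M) * H) / D0)) / D0 := by
  have h01 := sol_le_one H L D0 mu0 M k hH hD0 hmu0 hOM hu
  obtain ⟨hD3, hmu3, hDpos, hmupos, hDb, hmub⟩ := hOM
  obtain ⟨hu2, hu0, huH, hueq⟩ := hu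
  set lam2 := (lamk L k)^2 with hlam2def
  have hlam2 : 0 ≤ lam2 := sq_nonneg _
  set cM := M + lam2 * M with hcMdef
  have hcM : 0 < cM := by nlinarith
  set B1 := (M / H + cM * H) / D0 with hB1def
  have hMH : 0 < M / H := by positivity
  have hB1 : 0 ≤ B1 := by
    apply div_nonneg _ hD0.le
    nlinarith
  set B2 := (cM + M * B1) / D0 with hB2def
  have hB2 : 0 ≤ B2 := by
    apply div_nonneg _ hD0.le
    nlinarith
  clear_value lam2 cM B1 B2
  have hDpos' : ∀ y ∈ Icc (0:ℝ) H, 0 < D y := fun y hy => lt_trans hD0 (hDpos y hy)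
  have hDdiff : Differentiable ℝ D := hD3.differentiable (by norm_num)
  have hudiff : Differentiable ℝ u := hu2.differentiable (by norm_num)
  have hud1 : ContDiff ℝ 1 (deriv u) := by
    rw [show (2 : WithTop ℕ∞) = 1 + 1 by norm_num] at hu2
    exact (contDiff_succ_iff_deriv.mp hu2).2.2
  have hudd : Differentiable ℝ (deriv u) := hud1.differentiable one_ne_zero
  have huddc : Continuous (deriv (deriv u)) := hud1.continuous_deriv le_rfl
  have heq' : ∀ y ∈ Ioo (0:ℝ) H,
      deriv (fun z => D z * deriv u z) y = (mu y + lam2 * D y) * u y := by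
    intro y hy
    have := hueq y hy
    linarith
  have habs : ∀ y ∈ Icc (0:ℝ) H, |u y| ≤ 1 := by
    intro y hy
    rw [abs_le]
    exact ⟨by linarith [(h01 y hy).1], (h01 y hy).2⟩
  have hDabs : ∀ y ∈ Icc (0:ℝ) H, |D y| ≤ M := by
    intro y hy
    have := hDb 0 (by norm_num) y hy
    rwa [iteratedDeriv_zero] at this
  have hD'abs : ∀ y ∈ Icc (0:ℝ) H, |deriv D y| ≤ M := by
    intro y hy
    have := hDb 1 (by norm_num) y hy
    rwa [iteratedDeriv_one] at this
  have hmuabs : ∀ y ∈ Icc (0:ℝ) H, |mu y| ≤ M := by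
    intro y hy
    have := hmub 0 (by norm_num) y hy
    rwa [iteratedDeriv_zero] at this
  have hcabs : ∀ y ∈ Icc (0:ℝ) H, |mu y + lam2 * D y| ≤ cM := by
    intro y hy
    calc |mu y + lam2 * D y| ≤ |mu y| + |lam2 * D y| := abs_add_le _ _
      _ = |mu y| + lam2 * |D y| := by rw [abs_mul, abs_of_nonneg hlam2]
      _ ≤ M + lam2 * M := by
          have h1 := hmuabs y hy
          have h2 := hDabs y hy
          nlinarith
      _ = cM := hcMdef.symm
  obtain ⟨ξ, hξ, hξs⟩ := exists_hasDerivAt_eq_slope u (deriv u) hH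
    hudiff.continuous.continuousOn (fun z _ => (hudiff z).hasDerivAt)
  rw [hu0, huH] at hξs
  have hξs' : deriv u ξ = 1 / H := by rw [hξs]; norm_num
  have hgdiff : Differentiable ℝ (fun z => D z * deriv u z) := hDdiff.mul hudd
  have hgξ : |D ξ * deriv u ξ| ≤ M / H := by
    rw [hξs', abs_mul, abs_div, abs_one, abs_of_pos hH, mul_one_div]
    have := hDabs ξ (Ioo_subset_Icc_self hξ)
    gcongr
  have hgderiv : ∀ η ∈ Ioo (0:ℝ) H, |deriv (fun z => D z * deriv u z) η| ≤ cM := by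
    intro η hη
    rw [heq' η hη, abs_mul]
    have h1 := hcabs η (Ioo_subset_Icc_self hη)
    have h2 := habs η (Ioo_subset_Icc_self hη)
    nlinarith [abs_nonneg (mu η + lam2 * D η), abs_nonneg (u η)]
  have key : ∀ p q : ℝ, p ∈ Icc (0:ℝ) H → q ∈ Icc (0:ℝ) H → p < q →
      |D q * deriv u q - D p * deriv u p| ≤ cM * H := by
    intro p q hp hq hpq
    obtain ⟨η, hη, hηs⟩ := exists_hasDerivAt_eq_slope (fun z => D z * deriv u z)
      (deriv (fun z => D z * deriv u z)) hpq (hgdiff.continuous.continuousOn)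
      (fun z _ => (hgdiff z).hasDerivAt)
    have hηI : η ∈ Ioo (0:ℝ) H := ⟨lt_of_le_of_lt hp.1 hη.1, lt_of_lt_of_le hη.2 hq.2⟩
    have hne : q - p ≠ 0 := ne_of_gt (sub_pos.mpr hpq)
    have hmul : D q * deriv u q - D p * deriv u p
        = deriv (fun z => D z * deriv u z) η * (q - p) := by
      rw [hηs]
      field_simp
    rw [hmul, abs_mul]
    have h1 := hgderiv η hηI
    have h2 : |q - p| ≤ H := by
      rw [abs_of_pos (sub_pos.mpr hpq)]
      have := hp.1
      have := hq.2
      linarith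
    nlinarith [abs_nonneg (deriv (fun z => D z * deriv u z) η), abs_nonneg (q - p)]
  have hgball : ∀ y ∈ Icc (0:ℝ) H, |D y * deriv u y| ≤ M / H + cM * H := by
    intro y hy
    rcases lt_trichotomy y ξ with h | h | h
    · have h1 := key y ξ hy (Ioo_subset_Icc_self hξ) h
      have h2 := abs_sub_le' (D ξ * deriv u ξ) (D ξ * deriv u ξ - D y * deriv u y)
      have h3 : D ξ * deriv u ξ - (D ξ * deriv u ξ - D y * deriv u y) = D y * deriv u y := by
        ring
      rw [h3] at h2
      linarith [hgξ, h1]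
    · rw [h]
      have : 0 ≤ cM * H := by positivity
      linarith [hgξ]
    · have h1 := key ξ y (Ioo_subset_Icc_self hξ) hy h
      have h2 := abs_sub_le' (D ξ * deriv u ξ) (D ξ * deriv u ξ - D y * deriv u y)
      have h3 : D ξ * deriv u ξ - (D ξ * deriv u ξ - D y * deriv u y) = D y * deriv u y := by
        ring
      rw [h3] at h2
      have h4 : |D ξ * deriv u ξ - D y * deriv u y| ≤ cM * H := by
        rw [abs_sub_comm]
        exact h1
      linarith [hgξ]
  have hub1 : ∀ y ∈ Icc (0:ℝ) H, |deriv u y| ≤ B1 := by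
    intro y hy
    have hDy := hDpos y hy
    have h1 : D0 * |deriv u y| ≤ |D y * deriv u y| := by
      rw [abs_mul, abs_of_pos (hDpos' y hy)]
      exact mul_le_mul_of_nonneg_right hDy.le (abs_nonneg _)
    rw [hB1def, le_div_iff₀ hD0]
    have h2 := hgball y hy
    linarith only [h1, h2]
  have hIoo2 : ∀ y ∈ Ioo (0:ℝ) H, |deriv (deriv u) y| ≤ B2 := by
    intro y hy
    have hyI := Ioo_subset_Icc_self hy
    have hprod : deriv (fun z => D z * deriv u z) y
        = deriv D y * deriv u y + D y * deriv (deriv u) y :=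
      ((hDdiff y).hasDerivAt.mul (hudd y).hasDerivAt).deriv
    have heq2 : D y * deriv (deriv u) y
        = (mu y + lam2 * D y) * u y - deriv D y * deriv u y := by
      have := heq' y hy
      linarith [hprod]
    have habs2 : |D y * deriv (deriv u) y| ≤ cM + M * B1 := by
      rw [heq2]
      refine (abs_sub_le' _ _).trans ?_
      rw [abs_mul, abs_mul]
      have h1 := hcabs y hyI
      have h2 := habs y hyI
      have h3 := hD'abs y hyI
      have h4 := hub1 y hyI
      nlinarith [abs_nonneg (mu y + lam2 * D y), abs_nonneg (u y), abs_nonneg (deriv D y),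
        abs_nonneg (deriv u y)]
    have h1 : D0 * |deriv (deriv u) y| ≤ |D y * deriv (deriv u) y| := by
      rw [abs_mul, abs_of_pos (hDpos' y hyI)]
      exact mul_le_mul_of_nonneg_right (hDpos y hyI).le (abs_nonneg _)
    rw [hB2def, le_div_iff₀ hD0]
    linarith only [h1, habs2]
  have hub2 : ∀ y ∈ Icc (0:ℝ) H, |deriv (deriv u) y| ≤ B2 := by
    have hclosed : IsClosed {y : ℝ | |deriv (deriv u) y| ≤ B2} :=
      isClosed_le huddc.abs continuous_const
    have hsub : Icc (0:ℝ) H ⊆ {y : ℝ | |deriv (deriv u) y| ≤ B2} := by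
      rw [← closure_Ioo hH.ne]
      exact closure_minimal (fun y hy => hIoo2 y hy) hclosed
    exact fun y hy => hsub hy
  have hn0 : cNorm0 H u ≤ 1 := cNorm0_le zero_le_one habs
  have hn1 : cNorm0 H (deriv u) ≤ B1 := cNorm0_le hB1 hub1
  have hn2 : cNorm0 H (deriv (deriv u)) ≤ B2 := cNorm0_le hB2 hub2
  have hunfold : cNorm2 H u = cNorm0 H u + cNorm0 H (deriv u) + cNorm0 H (deriv (deriv u)) := by
    rw [cNorm2, cNorm1]
  rw [hunfold]
  linarith


private lemma exists_sol (H L D0 mu0 M : ℝ) (k : ℤ) (hH : 0 < H) (hD0 : 0 < D0)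
    (hmu0 : 0 < mu0) {D mu : ℝ → ℝ} (hOM : InOM H D0 mu0 M D mu) :
    ∃ u : ℝ → ℝ, IsSol H L k D mu u := by
  obtain ⟨hD3, hmu3, hDposD0, hmupos, hDb, hmub⟩ := hOM
  have hDpos : ∀ y ∈ Icc (0:ℝ) H, 0 < D y := fun y hy => lt_trans hD0 (hDposD0 y hy)
  have hDdiff : Differentiable ℝ D := hD3.differentiable (by norm_num)
  have hDcont : Continuous D := hD3.continuous
  have hmucont : Continuous mu := hmu3.continuous
  have hD'cont : Continuous (deriv D) := hD3.continuous_deriv (by norm_num)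
  set proj : ℝ → ℝ := fun y => max 0 (min y H) with hprojdef
  have hprojmem : ∀ y, proj y ∈ Icc (0:ℝ) H := fun y =>
    ⟨le_max_left _ _, max_le hH.le (min_le_right _ _)⟩
  have hprojid : ∀ y ∈ Icc (0:ℝ) H, proj y = y := by
    intro y hy
    rw [hprojdef]
    simp only []
    rw [min_eq_left hy.2, max_eq_right hy.1]
  have hprojcont : Continuous proj := continuous_const.max (continuous_id.min continuous_const)
  set lam2 := (lamk L k)^2 with hlam2def
  have hlam2 : 0 ≤ lam2 := sq_nonneg _
  set α : ℝ → ℝ := fun t => (mu (proj t) + lam2 * D (proj t)) / D (proj t) with hαdef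
  set β : ℝ → ℝ := fun t => -(deriv D (proj t)) / D (proj t) with hβdef
  have hDprojpos : ∀ t, 0 < D (proj t) := fun t => hDpos _ (hprojmem t)
  have hDprojne : ∀ t, D (proj t) ≠ 0 := fun t => ne_of_gt (hDprojpos t)
  have hDabs' : ∀ t, |D (proj t)| ≤ M := fun t => by
    simpa [iteratedDeriv_zero] using hDb 0 (by norm_num) _ (hprojmem t)
  have hmuabs' : ∀ t, |mu (proj t)| ≤ M := fun t => by
    simpa [iteratedDeriv_zero] using hmub 0 (by norm_num) _ (hprojmem t)
  have hD'abs' : ∀ t, |deriv D (proj t)| ≤ M := fun t => by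
    simpa [iteratedDeriv_one] using hDb 1 (by norm_num) _ (hprojmem t)
  have hMnn : 0 ≤ M := le_trans (abs_nonneg _) (hDabs' 0)
  set Ka := (M + lam2 * M) / D0 with hKadef
  set Kb := M / D0 with hKbdef
  have hKa : ∀ t, |α t| ≤ Ka := by
    intro t
    rw [hαdef]
    simp only []
    rw [abs_div, abs_of_pos (hDprojpos t)]
    apply div_le_div₀ (by nlinarith) ?_ hD0 (hDposD0 _ (hprojmem t)).le
    calc |mu (proj t) + lam2 * D (proj t)|
        ≤ |mu (proj t)| + |lam2 * D (proj t)| := abs_add_le _ _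
      _ = |mu (proj t)| + lam2 * |D (proj t)| := by rw [abs_mul, abs_of_nonneg hlam2]
      _ ≤ M + lam2 * M := by
          have h1 := hmuabs' t
          have h2 := hDabs' t
          nlinarith
  have hKb : ∀ t, |β t| ≤ Kb := by
    intro t
    rw [hβdef]
    simp only []
    rw [abs_div, abs_of_pos (hDprojpos t), abs_neg]
    exact div_le_div₀ hMnn (hD'abs' t) hD0 (hDposD0 _ (hprojmem t)).le
  have hKann : 0 ≤ Ka := le_trans (abs_nonneg _) (hKa 0)
  have hKbnn : 0 ≤ Kb := le_trans (abs_nonneg _) (hKb 0)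
  have hαcont : Continuous α := by
    rw [hαdef]
    exact ((hmucont.comp hprojcont).add
      (continuous_const.mul (hDcont.comp hprojcont))).div (hDcont.comp hprojcont) hDprojne
  have hβcont : Continuous β := by
    rw [hβdef]
    exact ((hD'cont.comp hprojcont).neg).div (hDcont.comp hprojcont) hDprojne
  set f : ℝ → ℝ × ℝ → ℝ × ℝ := fun t p => (p.2, α t * p.1 + β t * p.2) with hfdef
  set K : ℝ≥0 := Real.toNNReal (1 + Ka + Kb) with hKdef
  have hKcoe : (K:ℝ) = 1 + Ka + Kb := Real.coe_toNNReal _ (by linarith)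
  have hlip : ∀ t, LipschitzWith K (f t) := by
    intro t
    apply LipschitzWith.of_dist_le_mul
    intro p q
    rw [hKcoe]
    simp only [hfdef, Prod.dist_eq, Real.dist_eq]
    have h1 : |p.1 - q.1| ≤ max |p.1 - q.1| |p.2 - q.2| := le_max_left _ _
    have h2 : |p.2 - q.2| ≤ max |p.1 - q.1| |p.2 - q.2| := le_max_right _ _
    have h0 : 0 ≤ max |p.1 - q.1| |p.2 - q.2| := le_trans (abs_nonneg _) h1
    rw [sup_le_iff]
    constructor
    · have ha := mul_nonneg hKann h0
      have hb := mul_nonneg hKbnn h0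
      nlinarith
    · have h3 : |α t * p.1 + β t * p.2 - (α t * q.1 + β t * q.2)|
          ≤ |α t| * |p.1 - q.1| + |β t| * |p.2 - q.2| := by
        calc |α t * p.1 + β t * p.2 - (α t * q.1 + β t * q.2)|
            = |α t * (p.1 - q.1) + β t * (p.2 - q.2)| := by ring_nf
          _ ≤ |α t * (p.1 - q.1)| + |β t * (p.2 - q.2)| := abs_add_le _ _
          _ = |α t| * |p.1 - q.1| + |β t| * |p.2 - q.2| := by rw [abs_mul, abs_mul]
      have h4 : |α t| * |p.1 - q.1| ≤ Ka * max |p.1 - q.1| |p.2 - q.2| :=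
        mul_le_mul (hKa t) h1 (abs_nonneg _) hKann
      have h5 : |β t| * |p.2 - q.2| ≤ Kb * max |p.1 - q.1| |p.2 - q.2| :=
        mul_le_mul (hKb t) h2 (abs_nonneg _) hKbnn
      nlinarith
  have hcont : ∀ p, Continuous fun t => f t p := by
    intro p
    simp only [hfdef]
    exact continuous_const.prodMk
      ((hαcont.mul continuous_const).add (hβcont.mul continuous_const))
  have hf0 : ∀ t, f t 0 = 0 := by
    intro t
    simp [hfdef]
  obtain ⟨x, hx0, hx⟩ := solOnIcc f K hlip hcont hf0 (a := -1) (b := H+1)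
    (by norm_num) (by linarith) ((0:ℝ), (1:ℝ))
  have hO : IsOpen (Ioo (-1:ℝ) (H+1)) := isOpen_Ioo
  have hIooO : Ioo (0:ℝ) H ⊆ Ioo (-1:ℝ) (H+1) := fun y hy =>
    ⟨by linarith [hy.1], by linarith [hy.2]⟩
  have hder : ∀ t ∈ Ioo (-1:ℝ) (H+1), HasDerivAt x (f t (x t)) t := fun t ht =>
    (hx t (Ioo_subset_Icc_self ht)).hasDerivAt (Icc_mem_nhds ht.1 ht.2)
  have h1 : ∀ t ∈ Ioo (-1:ℝ) (H+1), HasDerivAt (fun s => (x s).1) ((x t).2) t := by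
    intro t ht
    have := ((hder t ht).hasFDerivAt.fst).hasDerivAt
    simpa [hfdef] using this
  have h2 : ∀ t ∈ Ioo (-1:ℝ) (H+1),
      HasDerivAt (fun s => (x s).2) (α t * (x t).1 + β t * (x t).2) t := by
    intro t ht
    have := ((hder t ht).hasFDerivAt.snd).hasDerivAt
    simpa [hfdef] using this
  have hu₁diffOn : DifferentiableOn ℝ (fun s => (x s).1) (Ioo (-1:ℝ) (H+1)) :=
    fun t ht => ((h1 t ht).differentiableAt).differentiableWithinAt
  have hw₂diffOn : DifferentiableOn ℝ (fun s => (x s).2) (Ioo (-1:ℝ) (H+1)) :=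
    fun t ht => ((h2 t ht).differentiableAt).differentiableWithinAt
  have hw₂C1 : ContDiffOn ℝ 1 (fun s => (x s).2) (Ioo (-1:ℝ) (H+1)) := by
    rw [show (1 : WithTop ℕ∞) = 0 + 1 by norm_num, contDiffOn_succ_iff_deriv_of_isOpen hO]
    refine ⟨hw₂diffOn, by simp, ?_⟩
    rw [contDiffOn_zero]
    apply ContinuousOn.congr (f := fun t => α t * (x t).1 + β t * (x t).2)
    · exact (hαcont.continuousOn.mul hu₁diffOn.continuousOn).add
        (hβcont.continuousOn.mul hw₂diffOn.continuousOn)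
    · exact fun t ht => (h2 t ht).deriv
  have hu₁C2 : ContDiffOn ℝ 2 (fun s => (x s).1) (Ioo (-1:ℝ) (H+1)) := by
    rw [show (2 : WithTop ℕ∞) = 1 + 1 by norm_num, contDiffOn_succ_iff_deriv_of_isOpen hO]
    refine ⟨hu₁diffOn, by simp, ?_⟩
    exact hw₂C1.congr (fun t ht => (h1 t ht).deriv)
  obtain ⟨φ, hφ2, hφid, hφmem⟩ := exists_phi H hH
  set ψ : ℝ → ℝ := fun y => (x (φ y)).1 with hψdef
  have hψC2 : ContDiff ℝ 2 ψ := by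
    rw [← contDiffOn_univ]
    exact (hu₁C2.comp (hφ2.contDiffOn) (fun y _ => hφmem y)).congr (fun y _ => rfl)
  have hIccsub : Icc (0:ℝ) H ⊆ Icc (-(1:ℝ)/2) (H + 1/2) :=
    Icc_subset_Icc (by norm_num) (by linarith)
  have hψeqIcc : ∀ y ∈ Icc (0:ℝ) H, ψ y = (x y).1 := by
    intro y hy
    rw [hψdef]
    simp only []
    rw [hφid y (hIccsub hy)]
  have hψev : ∀ y ∈ Ioo (0:ℝ) H, ψ =ᶠ[𝓝 y] (fun s => (x s).1) := by
    intro y hy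
    apply eventually_of_mem (Ioo_mem_nhds hy.1 hy.2)
    intro z hz
    exact hψeqIcc z (Ioo_subset_Icc_self hz)
  have hderψ : ∀ y ∈ Ioo (0:ℝ) H, deriv ψ y = (x y).2 := by
    intro y hy
    rw [Filter.EventuallyEq.deriv_eq (hψev y hy)]
    exact (h1 y (hIooO hy)).deriv
  have hgev : ∀ y ∈ Ioo (0:ℝ) H,
      (fun z => D z * deriv ψ z) =ᶠ[𝓝 y] (fun z => D z * (x z).2) := by
    intro y hy
    apply eventually_of_mem (Ioo_mem_nhds hy.1 hy.2)
    intro z hz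
    simp only []
    rw [hderψ z hz]
  have hODE : ∀ y ∈ Ioo (0:ℝ) H,
      deriv (fun z => D z * deriv ψ z) y = (mu y + lam2 * D y) * ψ y := by
    intro y hy
    have hyO := hIooO hy
    have hyIcc := Ioo_subset_Icc_self hy
    have hd : HasDerivAt (fun z => D z * (x z).2)
        (deriv D y * (x y).2 + D y * (α y * (x y).1 + β y * (x y).2)) y :=
      (hDdiff y).hasDerivAt.mul (h2 y hyO)
    have hd2 : HasDerivAt (fun z => D z * deriv ψ z)
        (deriv D y * (x y).2 + D y * (α y * (x y).1 + β y * (x y).2)) y :=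
      hd.congr_of_eventuallyEq (hgev y hy)
    rw [hd2.deriv]
    have hpy : proj y = y := hprojid y hyIcc
    have hDy : D y ≠ 0 := ne_of_gt (hDpos y hyIcc)
    have hαy : α y = (mu y + lam2 * D y) / D y := by
      rw [hαdef]; simp only []; rw [hpy]
    have hβy : β y = -(deriv D y) / D y := by
      rw [hβdef]; simp only []; rw [hpy]
    rw [hαy, hβy, hψeqIcc y hyIcc]
    field_simp
    ring
  have hψ0 : ψ 0 = 0 := by
    rw [hψeqIcc 0 (left_mem_Icc.mpr hH.le), hx0]
  have hψdiffAll : Differentiable ℝ ψ := hψC2.differentiable (by norm_num)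
  have hgdiffAt : ∀ y ∈ Ioo (0:ℝ) H, DifferentiableAt ℝ (fun z => D z * deriv ψ z) y := by
    intro y hy
    exact (Filter.EventuallyEq.differentiableAt_iff (hgev y hy)).mpr
      ((hDdiff y).mul ((h2 y (hIooO hy)).differentiableAt))
  have hcpos : ∀ y ∈ Ioo (0:ℝ) H, 0 < mu y + lam2 * D y := by
    intro y hy
    have ha := hmupos y (Ioo_subset_Icc_self hy)
    have hb := hDpos y (Ioo_subset_Icc_self hy)
    nlinarith
  have hne : (x H).1 ≠ 0 := by
    intro hzero
    have hψH : ψ H = 0 := by rw [hψeqIcc H (right_mem_Icc.mpr hH.le), hzero]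
    have hup : ∀ y ∈ Icc (0:ℝ) H, ψ y ≤ 0 := by
      exact maxPrinciple hH D (fun y => mu y + lam2 * D y) ψ hDpos
        hψdiffAll.continuous.continuousOn (fun y _ => hψdiffAll y) hgdiffAt hcpos
        (fun y hy => le_of_eq (hODE y hy).symm) (le_of_eq hψ0) (le_of_eq hψH)
    have hlo : ∀ y ∈ Icc (0:ℝ) H, -ψ y ≤ 0 := by
      apply maxPrinciple hH D (fun y => mu y + lam2 * D y) (fun y => -ψ y) hDpos
        hψdiffAll.continuous.continuousOn.neg (fun y _ => (hψdiffAll y).neg) ?_ hcpos ?_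
        (by norm_num [hψ0]) (by norm_num [hψH])
      · intro y hy
        have hfun : (fun z => D z * deriv (fun t => -ψ t) z) = fun z => -(D z * deriv ψ z) :=
          funext fun z => by rw [deriv.fun_neg, mul_neg]
        rw [hfun]
        exact (hgdiffAt y hy).neg
      · intro y hy
        have hfun : (fun z => D z * deriv (fun t => -ψ t) z) = fun z => -(D z * deriv ψ z) :=
          funext fun z => by rw [deriv.fun_neg, mul_neg]
        rw [hfun, deriv.fun_neg, hODE y hy]
        apply le_of_eq
        ring
    have hzeroIcc : ∀ y ∈ Icc (0:ℝ) H, ψ y = 0 := by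
      intro y hy
      have hu' := hup y hy
      have hl' := hlo y hy
      linarith
    have hw₂0 : ∀ y ∈ Ioo (0:ℝ) H, (x y).2 = 0 := by
      intro y hy
      rw [← hderψ y hy]
      have hev0 : ψ =ᶠ[𝓝 y] (fun _ => (0:ℝ)) := by
        apply eventually_of_mem (Ioo_mem_nhds hy.1 hy.2)
        intro z hz
        exact hzeroIcc z (Ioo_subset_Icc_self hz)
      rw [Filter.EventuallyEq.deriv_eq hev0]
      simp
    have h0O : (0:ℝ) ∈ Ioo (-1:ℝ) (H+1) := ⟨by norm_num, by linarith⟩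
    have hcontAt : ContinuousAt (fun s => (x s).2) 0 :=
      (h2 0 h0O).differentiableAt.continuousAt
    have hNeBot : (𝓝[Ioo (0:ℝ) H] (0:ℝ)).NeBot := by
      rw [← mem_closure_iff_nhdsWithin_neBot, closure_Ioo hH.ne]
      exact left_mem_Icc.mpr hH.le
    have ht1 : Tendsto (fun s => (x s).2) (𝓝[Ioo (0:ℝ) H] 0) (𝓝 ((x 0).2)) :=
      (hcontAt.tendsto).mono_left nhdsWithin_le_nhds
    have ht2 : Tendsto (fun s => (x s).2) (𝓝[Ioo (0:ℝ) H] 0) (𝓝 0) := by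
      apply Tendsto.congr' _ tendsto_const_nhds
      apply eventuallyEq_of_mem self_mem_nhdsWithin
      intro z hz
      exact (hw₂0 z hz).symm
    have hcontr : (x 0).2 = 0 := tendsto_nhds_unique ht1 ht2
    rw [hx0] at hcontr
    norm_num at hcontr
  refine ⟨fun y => ψ y * ((x H).1)⁻¹, ?_, ?_, ?_, ?_⟩
  · exact hψC2.mul contDiff_const
  · simp [hψ0]
  · have hψH : ψ H = (x H).1 := hψeqIcc H (right_mem_Icc.mpr hH.le)
    simp only []
    rw [hψH]
    exact mul_inv_cancel₀ hne
  · intro y hy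
    have hderiv_u : ∀ z, deriv (fun t => ψ t * ((x H).1)⁻¹) z = deriv ψ z * ((x H).1)⁻¹ :=
      fun z => deriv_mul_const (hψdiffAll z) ((x H).1)⁻¹
    have hfun : (fun z => D z * deriv (fun t => ψ t * ((x H).1)⁻¹) z)
        = fun z => (D z * deriv ψ z) * ((x H).1)⁻¹ :=
      funext fun z => by rw [hderiv_u z]; ring
    rw [hfun, deriv_mul_const (hgdiffAt y hy) ((x H).1)⁻¹, hODE y hy]
    simp only []
    rw [hlam2def]
    ring

/- STATEMENT 10: For every (D,μ) ∈ O_M and every integer k, the BVP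
   −(D u′)′ + (μ + λ_k² D)u = 0 on (0,H), u(0)=0, u(H)=1 has a unique
   solution u_k ∈ C²([0,H]); moreover there is b > 0 depending only on
   (μ_0, D_0, M, L, H, k) with ‖u_k‖_{C²([0,H])} ≤ b for every (D,μ) ∈ O_M. -/
theorem optical_bvp_wellposed
    (H L D0 mu0 M : ℝ) (k : ℤ)
    (hH : 0 < H) (hL : 0 < L) (hD0 : 0 < D0) (hmu0 : 0 < mu0)
    (hM : max D0 mu0 < M) :
    (∀ D mu : ℝ → ℝ, InOM H D0 mu0 M D mu →
      (∃ u : ℝ → ℝ, IsSol H L k D mu u) ∧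
      (∀ u v : ℝ → ℝ, IsSol H L k D mu u → IsSol H L k D mu v →
        Set.EqOn u v (Set.Icc 0 H)))
    ∧ ∃ b > (0 : ℝ), ∀ D mu : ℝ → ℝ, InOM H D0 mu0 M D mu →
        ∀ u : ℝ → ℝ, IsSol H L k D mu u → cNorm2 H u ≤ b := by
  have hM0 : 0 < M := hD0.trans (lt_of_le_of_lt (le_max_left D0 mu0) hM)
  constructor
  · intro D mu hOM
    exact ⟨exists_sol H L D0 mu0 M k hH hD0 hmu0 hOM,
      fun u v hu hv => sol_unique H L D0 mu0 M k hH hD0 hmu0 hOM hu hv⟩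
  · refine ⟨1 + (M / H + (M + (lamk L k)^2 * M) * H) / D0
      + ((M + (lamk L k)^2 * M) + M * ((M / H + (M + (lamk L k)^2 * M) * H) / D0)) / D0,
      ?_, ?_⟩
    · have hlam2 : 0 ≤ (lamk L k)^2 := sq_nonneg _
      have h1 : 0 < M / H := by positivity
      have hcM : 0 < M + (lamk L k)^2 * M := by nlinarith
      have hB1 : 0 ≤ (M / H + (M + (lamk L k)^2 * M) * H) / D0 := by
        apply div_nonneg _ hD0.le
        nlinarith
      have hB2 : 0 ≤ ((M + (lamk L k)^2 * M)
          + M * ((M / H + (M + (lamk L k)^2 * M) * H) / D0)) / D0 := by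
        apply div_nonneg _ hD0.le
        nlinarith
      linarith
    · intro D mu hOM u hu
      exact sol_bound H L D0 mu0 M k hH hD0 hmu0 hM0 hOM hu
end

section
/- Let 0 < k_1 < k_2 be integers and assume κ_m(k_1) > 0 (where κ_m(k_1) = min_{[0,H]}((√D)″/√D + μ/D + λ_{k_1}²)). Define h = u_{k_2}/u_{k_1} on (0,H]. Then h is C² on (0,H], extends continuously to [0,H] with h(0) = lim_{y→0+} h(y) = u_{k_2}′(0)/u_{k_1}′(0), satisfies h(H) = 1, and obeys the first-order identity D(y)·u_{k_1}(y)²·h′(y) = (λ_{k_2}² − λ_{k_1}²)·∫_0^y D(s)·u_{k_1}(s)·u_{k_2}(s) ds for every y ∈ (0,H]; in particular −(D u_{k_1}² h′)′(y) + (λ_{k_2}² − λ_{k_1}²)·D(y)·u_{k_1}(y)²·h(y) = 0 on (0,H) and lim_{y→0+} D(y)u_{k_1}(y)²h′(y) = 0. -/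
/- STATEMENT 13: Let 0 < k_1 < k_2 and assume κ_m(k_1) > 0. Define
   h = u_{k_2}/u_{k_1} on (0,H]. Then h is C² on (0,H], extends continuously
   to [0,H] with h(0) = lim_{y→0+} h(y) = u_{k_2}′(0)/u_{k_1}′(0),
   satisfies h(H) = 1, obeys
   D·u_{k_1}²·h′(y) = (λ_{k_2}² − λ_{k_1}²)·∫_0^y D·u_{k_1}·u_{k_2} ds on (0,H];
   in particular −(D u_{k_1}² h′)′ + (λ_{k_2}² − λ_{k_1}²) D u_{k_1}² h = 0 on
   (0,H) and lim_{y→0+} D u_{k_1}² h′ = 0. -/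

private theorem sol_pos (H L D0 mu0 M : ℝ) (k : ℤ)
    (hH : 0 < H) (hD0 : 0 < D0) (hmu0 : 0 < mu0)
    (D mu : ℝ → ℝ) (hOM : InOM H D0 mu0 M D mu)
    (u : ℝ → ℝ) (hu : IsSol H L k D mu u) :
    (∀ y ∈ Set.Ioc (0:ℝ) H, 0 < u y) ∧ 0 < deriv u 0 := by
  obtain ⟨hD3, hmu3, hDpos, hmupos, hDb, hmub⟩ := hOM
  obtain ⟨hu2, hu0, huH, hode⟩ := hu
  set l2 : ℝ := (lamk L k) ^ 2 with hl2
  have hl2nn : 0 ≤ l2 := sq_nonneg _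
  set c : ℝ → ℝ := fun y => mu y + l2 * D y with hc
  set g : ℝ → ℝ := fun z => D z * deriv u z with hg
  -- basic regularity
  have hud : Differentiable ℝ u := hu2.differentiable (by norm_num)
  have hu2' : ContDiff ℝ ((1:ℕ) + 1) u := by norm_num; exact hu2
  have hdu1 : ContDiff ℝ 1 (deriv u) := (contDiff_succ_iff_deriv.mp hu2').2.2
  have hg1 : ContDiff ℝ 1 g := (hD3.of_le (by norm_num)).mul hdu1
  have hgd : Differentiable ℝ g := hg1.differentiable (by norm_num)
  have hucont : Continuous u := hud.continuous
  have hgode : ∀ y ∈ Set.Ioo (0:ℝ) H, deriv g y = c y * u y := by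
    intro y hy; have := hode y hy; simp only [hc]; linarith
  have hcpos : ∀ y ∈ Set.Icc (0:ℝ) H, 0 < c y := by
    intro y hy
    have h1 := hDpos y hy; have h2 := hmupos y hy
    have : 0 ≤ l2 * D y := mul_nonneg hl2nn (by linarith)
    show 0 < mu y + l2 * D y; nlinarith
  -- Step B : Gronwall-type uniqueness
  have gron : ∀ a ∈ Set.Ico (0:ℝ) H, u a = 0 → deriv u a = 0 → False := by
    intro a ha hua hua'
    -- bound on |c|
    have hDM : ∀ y ∈ Set.Icc (0:ℝ) H, |D y| ≤ M := by
      intro y hy; have := hDb 0 (by norm_num) y hy; simpa [iteratedDeriv_zero] using this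
    have hmuM : ∀ y ∈ Set.Icc (0:ℝ) H, |mu y| ≤ M := by
      intro y hy; have := hmub 0 (by norm_num) y hy; simpa [iteratedDeriv_zero] using this
    set K : ℝ := M + l2 * M + 1 with hK
    have hcK : ∀ y ∈ Set.Icc (0:ℝ) H, |c y| ≤ K := by
      intro y hy
      have h1 := hDM y hy; have h2 := hmuM y hy
      calc |c y| ≤ |mu y| + |l2 * D y| := abs_add_le _ _
        _ ≤ M + l2 * M + 1 := by
            rw [abs_mul, abs_of_nonneg hl2nn]
            nlinarith [abs_nonneg (mu y)]
    set Kc : ℝ := 1 / D0 + K with hKc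
    set E : ℝ → ℝ := fun z => u z ^ 2 + g z ^ 2 with hE
    set φ : ℝ → ℝ := fun z => E z * Real.exp (-Kc * z) with hφ
    have hEd : Differentiable ℝ E := (hud.pow 2).add (hgd.pow 2)
    have hEderiv : ∀ y, HasDerivAt E (2 * u y * deriv u y + 2 * g y * deriv g y) y := by
      intro y
      have h1 : HasDerivAt (fun z => u z ^ 2) (2 * u y * deriv u y) y := by
        simpa [mul_comm] using ((hud y).hasDerivAt.fun_pow 2)
      have h2 : HasDerivAt (fun z => g z ^ 2) (2 * g y * deriv g y) y := by
        simpa [mul_comm] using ((hgd y).hasDerivAt.fun_pow 2)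
      exact h1.add h2
    have hφd : ∀ y, HasDerivAt φ ((2 * u y * deriv u y + 2 * g y * deriv g y) * Real.exp (-Kc * y) + E y * (Real.exp (-Kc * y) * -Kc)) y := by
      intro y
      have h1 : HasDerivAt (fun z : ℝ => -Kc * z) (-Kc) y := by
        simpa using (hasDerivAt_id y).const_mul (-Kc)
      have h2 : HasDerivAt (fun z => Real.exp (-Kc * z)) (Real.exp (-Kc * y) * -Kc) y := h1.exp
      exact (hEderiv y).mul h2
    have key : AntitoneOn φ (Set.Icc a H) := by
      apply antitoneOn_of_deriv_nonpos (convex_Icc a H)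
      · exact ((hEd.continuous.mul (Real.continuous_exp.comp (continuous_const.mul continuous_id))).continuousOn)
      · intro x hx
        exact ((hφd x).differentiableAt).differentiableWithinAt
      · intro x hx
        rw [interior_Icc] at hx
        have hx0 : x ∈ Set.Ioo (0:ℝ) H := ⟨lt_of_le_of_lt ha.1 hx.1, hx.2⟩
        have hxI : x ∈ Set.Icc (0:ℝ) H := ⟨le_of_lt hx0.1, le_of_lt hx0.2⟩
        rw [(hφd x).deriv]
        have hDx : 0 < D x := lt_trans hD0 (hDpos x hxI)
        have hderu : deriv u x = g x / D x := by
          show deriv u x = D x * deriv u x / D x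
          exact (mul_div_cancel_left₀ _ (ne_of_gt hDx)).symm
        have hgx := hgode x hx0
        have hexp : 0 < Real.exp (-Kc * x) := Real.exp_pos _
        -- show E' x ≤ Kc * E x
        have h2ab : 2 * |u x| * |g x| ≤ u x ^ 2 + g x ^ 2 := by
          have := two_mul_le_add_sq (|u x|) (|g x|)
          simpa [sq_abs] using this
        set p : ℝ := 2 * u x * g x with hp
        set q : ℝ := u x ^ 2 + g x ^ 2 with hq
        have hq0 : 0 ≤ q := by positivity
        have hpq : |p| ≤ q := by
          rw [hp, hq, abs_mul, abs_mul, abs_two, ← sq_abs (u x), ← sq_abs (g x)]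
          exact two_mul_le_add_sq _ _
        have hpq1 : p ≤ q := (le_abs_self p).trans hpq
        have hcKx := hcK x hxI
        have hK0 : 0 ≤ K := (abs_nonneg _).trans hcKx
        have t1 : p / D x ≤ q / D0 := by
          rcases le_or_gt p 0 with hple | hplt
          · exact (div_nonpos_of_nonpos_of_nonneg hple (le_of_lt hDx)).trans
              (div_nonneg hq0 (le_of_lt hD0))
          · rw [div_le_div_iff₀ hDx hD0]
            have hDx2 := hDpos x hxI
            nlinarith
        have t2 : c x * p ≤ K * q := by
          calc c x * p ≤ |c x * p| := le_abs_self _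
            _ = |c x| * |p| := abs_mul _ _
            _ ≤ K * q := mul_le_mul hcKx hpq (abs_nonneg _) hK0
        have hEb : 2 * u x * deriv u x + 2 * g x * deriv g x ≤ Kc * E x := by
          rw [hderu, hgx]
          have hrw : 2 * u x * (g x / D x) + 2 * g x * (c x * u x) = p / D x + c x * p := by
            rw [hp]; ring
          have hrw2 : Kc * E x = q / D0 + K * q := by
            simp only [hE, hKc, hq]; ring
          rw [hrw, hrw2]
          exact add_le_add t1 t2
        have hfact : (2 * u x * deriv u x + 2 * g x * deriv g x) * Real.exp (-Kc * x) + E x * (Real.exp (-Kc * x) * -Kc)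
            = ((2 * u x * deriv u x + 2 * g x * deriv g x) - Kc * E x) * Real.exp (-Kc * x) := by ring
        rw [hfact]
        exact mul_nonpos_of_nonpos_of_nonneg (by linarith) (le_of_lt hexp)
    -- conclude
    have hEa : E a = 0 := by simp [hE, hg, hua, hua']
    have hφa : φ a = 0 := by simp [hφ, hEa]
    have hφH : φ H ≤ 0 := by
      have := key (Set.left_mem_Icc.mpr (le_of_lt ha.2)) (Set.right_mem_Icc.mpr (le_of_lt ha.2)) (le_of_lt ha.2)
      rw [hφa] at this; exact this
    have hEH : E H ≤ 0 := by
      have hexp : 0 < Real.exp (-Kc * H) := Real.exp_pos _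
      by_contra h; push_neg at h
      have : 0 < φ H := mul_pos h hexp
      linarith
    have : (1:ℝ) ≤ E H := by
      have : u H ^ 2 ≤ E H := by simp only [hE]; nlinarith [sq_nonneg (g H)]
      rw [huH] at this; linarith
    linarith
  -- Step A: nonnegativity via maximum principle
  have hnn : ∀ y ∈ Set.Icc (0:ℝ) H, 0 ≤ u y := by
    obtain ⟨y0, hy0, hmin⟩ := isCompact_Icc.exists_isMinOn
      (Set.nonempty_Icc.mpr (le_of_lt hH)) hucont.continuousOn
    have h0 : 0 ≤ u y0 := by
      by_contra hneg; push_neg at hneg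
      have hy0I : y0 ∈ Set.Ioo (0:ℝ) H := by
        rcases hy0 with ⟨h1, h2⟩
        rcases lt_or_eq_of_le h1 with h1' | h1'
        · rcases lt_or_eq_of_le h2 with h2' | h2'
          · exact ⟨h1', h2'⟩
          · exfalso; rw [h2', huH] at hneg; linarith
        · exfalso; rw [← h1', hu0] at hneg; linarith
      have hloc : IsLocalMin u y0 := hmin.isLocalMin (Icc_mem_nhds hy0I.1 hy0I.2)
      have hder0 : deriv u y0 = 0 := hloc.deriv_eq_zero
      have hgy0 : g y0 = 0 := by simp [hg, hder0]
      have hdgneg : deriv g y0 < 0 := by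
        rw [hgode y0 hy0I]
        exact mul_neg_of_pos_of_neg (hcpos y0 hy0) hneg
      have hsl : Filter.Tendsto (slope g y0) (nhdsWithin y0 (Set.Iio y0)) (nhds (deriv g y0)) :=
        (hasDerivAt_iff_tendsto_slope.mp (hgd y0).hasDerivAt).mono_left
          (nhdsWithin_mono _ (fun z hz => ne_of_lt hz))
      have hev : ∀ᶠ y in nhdsWithin y0 (Set.Iio y0), slope g y0 y < 0 :=
        hsl.eventually_lt_const hdgneg
      have hev2 : ∀ᶠ y in nhdsWithin y0 (Set.Iio y0), y ∈ Set.Ioo (0:ℝ) y0 :=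
        Filter.eventually_of_mem (Ioo_mem_nhdsLT_of_mem ⟨hy0I.1, le_refl y0⟩) (fun y hy => hy)
      have hboth := hev.and hev2
      rw [Filter.eventually_iff, mem_nhdsLT_iff_exists_Ioo_subset] at hboth
      obtain ⟨l, hl, hsub⟩ := hboth
      have hmaxlt : max l 0 < y0 := max_lt hl hy0I.1
      set t : ℝ := (max l 0 + y0) / 2 with ht
      have htlt : max l 0 < t ∧ t < y0 := by constructor <;> (rw [ht]; linarith)
      have ht0 : 0 < t := lt_of_le_of_lt (le_max_right l 0) htlt.1
      have hmono : StrictMonoOn u (Set.Icc t y0) := by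
        apply strictMonoOn_of_deriv_pos (convex_Icc t y0) hucont.continuousOn
        intro x hx
        rw [interior_Icc] at hx
        have hxl : x ∈ Set.Ioo l y0 := ⟨lt_trans (lt_of_le_of_lt (le_max_left l 0) htlt.1) hx.1, hx.2⟩
        obtain ⟨hslx, hxm⟩ := hsub hxl
        have hxI2 : x ∈ Set.Icc (0:ℝ) H :=
          ⟨le_of_lt hxm.1, le_of_lt (lt_of_lt_of_le hxm.2 hy0.2)⟩
        have hDx : 0 < D x := lt_trans hD0 (hDpos x hxI2)
        have hgxpos : 0 < g x := by
          have hsf : slope g y0 x = (g x - g y0) / (x - y0) := slope_def_field g y0 x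
          rw [hgy0, sub_zero] at hsf
          have hxy0 : x - y0 < 0 := by linarith [hx.2]
          have hgxeq : g x = slope g y0 x * (x - y0) := by
            rw [hsf, div_mul_cancel₀ _ (ne_of_lt hxy0)]
          rw [hgxeq]
          exact mul_pos_of_neg_of_neg hslx hxy0
        by_contra hcon; push_neg at hcon
        have : g x ≤ 0 := by
          have : D x * deriv u x ≤ 0 := mul_nonpos_of_nonneg_of_nonpos (le_of_lt hDx) hcon
          simpa [hg] using this
        linarith
      have htI : t ∈ Set.Icc (0:ℝ) H := ⟨le_of_lt ht0, le_trans (le_of_lt htlt.2) hy0.2⟩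
      have h1 : u t < u y0 := hmono ⟨le_rfl, le_of_lt htlt.2⟩ ⟨le_of_lt htlt.2, le_rfl⟩ htlt.2
      have h2 : u y0 ≤ u t := hmin htI
      linarith
    intro y hy; exact le_trans h0 (hmin hy)
  -- Step C: strict positivity
  have hpos : ∀ y ∈ Set.Ioc (0:ℝ) H, 0 < u y := by
    intro y hy
    rcases lt_or_eq_of_le (hnn y ⟨le_of_lt hy.1, hy.2⟩) with h | h
    · exact h
    · exfalso
      have hyH : y ≠ H := by
        intro he; rw [he, huH] at h; linarith
      have hyIoo : y ∈ Set.Ioo (0:ℝ) H := ⟨hy.1, lt_of_le_of_ne hy.2 hyH⟩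
      have hloc : IsLocalMin u y := by
        filter_upwards [Icc_mem_nhds hyIoo.1 hyIoo.2] with z hz
        rw [← h]; exact hnn z hz
      exact gron y ⟨le_of_lt hy.1, hyIoo.2⟩ h.symm hloc.deriv_eq_zero
  -- Step D: positive derivative at 0
  refine ⟨hpos, ?_⟩
  have hne : deriv u 0 ≠ 0 := fun h0 => gron 0 ⟨le_rfl, hH⟩ hu0 h0
  have hge : 0 ≤ deriv u 0 := by
    have hsl : Filter.Tendsto (slope u 0) (nhdsWithin 0 (Set.Ioi 0)) (nhds (deriv u 0)) :=
      (hasDerivAt_iff_tendsto_slope.mp (hud 0).hasDerivAt).mono_left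
        (nhdsWithin_mono _ (fun z hz => ne_of_gt hz))
    apply ge_of_tendsto hsl
    filter_upwards [Ioc_mem_nhdsGT_of_mem (Set.mem_Ico.mpr ⟨le_rfl, hH⟩)] with z hz
    have hsf : slope u 0 z = (u z - u 0) / (z - 0) := slope_def_field u 0 z
    rw [hsf, hu0, sub_zero, sub_zero]
    exact div_nonneg (le_of_lt (hpos z hz)) (le_of_lt hz.1)
  exact lt_of_le_of_ne hge (Ne.symm hne)

theorem quotient_data_identities
    (H L D0 mu0 M : ℝ) (k1 k2 : ℤ)
    (hH : 0 < H) (hL : 0 < L) (hD0 : 0 < D0) (hmu0 : 0 < mu0)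
    (hM : max D0 mu0 < M)
    (hk1 : 0 < k1) (hk12 : k1 < k2)
    (D mu : ℝ → ℝ) (hOM : InOM H D0 mu0 M D mu)
    (u1 u2 : ℝ → ℝ)
    (hu1 : IsSol H L k1 D mu u1) (hu2 : IsSol H L k2 D mu u2)
    (hkap : 0 < kapm H L k1 D mu) :
    ContDiffOn ℝ 2 (fun y => u2 y / u1 y) (Set.Ioc 0 H)
    ∧ Filter.Tendsto (fun y => u2 y / u1 y) (nhdsWithin 0 (Set.Ioi 0))
        (nhds (deriv u2 0 / deriv u1 0))
    ∧ u2 H / u1 H = 1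
    ∧ (∀ y ∈ Set.Ioc (0 : ℝ) H,
        D y * (u1 y) ^ 2 * deriv (fun z => u2 z / u1 z) y
          = ((lamk L k2) ^ 2 - (lamk L k1) ^ 2)
            * ∫ s in (0 : ℝ)..y, D s * u1 s * u2 s)
    ∧ (∀ y ∈ Set.Ioo (0 : ℝ) H,
        -(deriv (fun z => D z * (u1 z) ^ 2
            * deriv (fun w => u2 w / u1 w) z) y)
          + ((lamk L k2) ^ 2 - (lamk L k1) ^ 2)
            * (D y * (u1 y) ^ 2 * (u2 y / u1 y)) = 0)
    ∧ Filter.Tendsto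
        (fun y => D y * (u1 y) ^ 2 * deriv (fun z => u2 z / u1 z) y)
        (nhdsWithin 0 (Set.Ioi 0)) (nhds 0) := by
  obtain ⟨hpos1, hd1⟩ := sol_pos H L D0 mu0 M k1 hH hD0 hmu0 D mu hOM u1 hu1
  obtain ⟨hu12, hu10, hu1H, hode1⟩ := hu1
  obtain ⟨hu22, hu20, hu2H, hode2⟩ := hu2
  have hD3 := hOM.1
  have hDcont : Continuous D := hD3.continuous
  have hu1d : Differentiable ℝ u1 := hu12.differentiable (by norm_num)
  have hu2d : Differentiable ℝ u2 := hu22.differentiable (by norm_num)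
  have hu12' : ContDiff ℝ ((1:ℕ) + 1) u1 := by norm_num; exact hu12
  have hu22' : ContDiff ℝ ((1:ℕ) + 1) u2 := by norm_num; exact hu22
  have hdu1c : ContDiff ℝ 1 (deriv u1) := (contDiff_succ_iff_deriv.mp hu12').2.2
  have hdu2c : ContDiff ℝ 1 (deriv u2) := (contDiff_succ_iff_deriv.mp hu22').2.2
  have hg1 : ContDiff ℝ 1 (fun z => D z * deriv u1 z) := (hD3.of_le (by norm_num)).mul hdu1c
  have hg2 : ContDiff ℝ 1 (fun z => D z * deriv u2 z) := (hD3.of_le (by norm_num)).mul hdu2c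
  set Δ : ℝ := (lamk L k2) ^ 2 - (lamk L k1) ^ 2 with hΔ
  set W : ℝ → ℝ := fun z => u1 z * (D z * deriv u2 z) - u2 z * (D z * deriv u1 z) with hW
  have hWd : ∀ y ∈ Set.Ioo (0:ℝ) H, HasDerivAt W (Δ * (D y * u1 y * u2 y)) y := by
    intro y hy
    have e2 : deriv (fun z => D z * deriv u2 z) y
        = (mu y + (lamk L k2) ^ 2 * D y) * u2 y := by
      have := hode2 y hy; linarith
    have e1 : deriv (fun z => D z * deriv u1 z) y
        = (mu y + (lamk L k1) ^ 2 * D y) * u1 y := by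
      have := hode1 y hy; linarith
    have h1 : HasDerivAt (fun z => D z * deriv u2 z)
        ((mu y + (lamk L k2) ^ 2 * D y) * u2 y) y :=
      e2 ▸ ((hg2.differentiable (by norm_num)) y).hasDerivAt
    have h2 : HasDerivAt (fun z => D z * deriv u1 z)
        ((mu y + (lamk L k1) ^ 2 * D y) * u1 y) y :=
      e1 ▸ ((hg1.differentiable (by norm_num)) y).hasDerivAt
    have h3 : HasDerivAt u1 (deriv u1 y) y := (hu1d y).hasDerivAt
    have h4 : HasDerivAt u2 (deriv u2 y) y := (hu2d y).hasDerivAt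
    have h5 := (h3.fun_mul h1).fun_sub (h4.fun_mul h2)
    refine h5.congr_deriv ?_
    rw [hΔ]; ring
  have hWcont : Continuous W :=
    ((hu1d.continuous.mul (hg2.continuous)).sub (hu2d.continuous.mul (hg1.continuous)))
  have hW0 : W 0 = 0 := by simp [hW, hu10, hu20]
  have hci : Continuous fun s => D s * u1 s * u2 s :=
    (hDcont.mul hu1d.continuous).mul hu2d.continuous
  have ftc : ∀ y ∈ Set.Ioc (0:ℝ) H,
      (∫ s in (0:ℝ)..y, Δ * (D s * u1 s * u2 s)) = W y - W 0 := by
    intro y hy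
    apply intervalIntegral.integral_eq_sub_of_hasDeriv_right_of_le (le_of_lt hy.1)
    · exact hWcont.continuousOn
    · intro x hx
      exact (hWd x ⟨hx.1, lt_of_lt_of_le hx.2 hy.2⟩).hasDerivWithinAt
    · exact ((continuous_const.mul hci).intervalIntegrable _ _)
  have key4 : ∀ y ∈ Set.Ioc (0:ℝ) H,
      D y * (u1 y) ^ 2 * deriv (fun z => u2 z / u1 z) y
        = Δ * ∫ s in (0:ℝ)..y, D s * u1 s * u2 s := by
    intro y hy
    have hu1ne : u1 y ≠ 0 := ne_of_gt (hpos1 y hy)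
    have hder : deriv (fun z => u2 z / u1 z) y
        = (deriv u2 y * u1 y - u2 y * deriv u1 y) / u1 y ^ 2 :=
      deriv_div (hu2d y) (hu1d y) hu1ne
    rw [hder]
    have hmul : Δ * ∫ s in (0:ℝ)..y, D s * u1 s * u2 s
        = ∫ s in (0:ℝ)..y, Δ * (D s * u1 s * u2 s) := by
      rw [← intervalIntegral.integral_const_mul]
    rw [hmul, ftc y hy, hW0, sub_zero, hW]
    field_simp
  refine ⟨?_, ?_, ?_, key4, ?_, ?_⟩
  · exact ContDiffOn.div (hu22.contDiffOn) (hu12.contDiffOn)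
      (fun y hy => ne_of_gt (hpos1 y hy))
  · -- limit at 0
    have hd1ne : deriv u1 0 ≠ 0 := ne_of_gt hd1
    have hs1 : Filter.Tendsto (slope u1 0) (nhdsWithin 0 (Set.Ioi 0)) (nhds (deriv u1 0)) :=
      (hasDerivAt_iff_tendsto_slope.mp (hu1d 0).hasDerivAt).mono_left
        (nhdsWithin_mono _ (fun z hz => ne_of_gt hz))
    have hs2 : Filter.Tendsto (slope u2 0) (nhdsWithin 0 (Set.Ioi 0)) (nhds (deriv u2 0)) :=
      (hasDerivAt_iff_tendsto_slope.mp (hu2d 0).hasDerivAt).mono_left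
        (nhdsWithin_mono _ (fun z hz => ne_of_gt hz))
    have hquot := hs2.div hs1 hd1ne
    apply hquot.congr'
    filter_upwards [Ioc_mem_nhdsGT_of_mem (Set.mem_Ico.mpr ⟨le_rfl, hH⟩)] with z hz
    have hzne : z ≠ 0 := ne_of_gt hz.1
    have hu1zne : u1 z ≠ 0 := ne_of_gt (hpos1 z hz)
    simp only [Pi.div_apply]
    rw [slope_def_field, slope_def_field, hu10, hu20, sub_zero, sub_zero, sub_zero]
    field_simp
  · rw [hu1H, hu2H]; norm_num
  · -- second order ODE
    intro y hy
    have hu1ne : u1 y ≠ 0 := ne_of_gt (hpos1 y ⟨hy.1, le_of_lt hy.2⟩)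
    have hF : HasDerivAt (fun z => Δ * ∫ s in (0:ℝ)..z, D s * u1 s * u2 s)
        (Δ * (D y * u1 y * u2 y)) y := by
      have h := intervalIntegral.integral_hasDerivAt_right
        (hci.intervalIntegrable 0 y)
        (hci.stronglyMeasurable.stronglyMeasurableAtFilter)
        hci.continuousAt
      exact h.const_mul Δ
    have heq : deriv (fun z => D z * (u1 z) ^ 2 * deriv (fun w => u2 w / u1 w) z) y
        = Δ * (D y * u1 y * u2 y) := by
      have hev : (fun z => D z * (u1 z) ^ 2 * deriv (fun w => u2 w / u1 w) z)
          =ᶠ[nhds y] (fun z => Δ * ∫ s in (0:ℝ)..z, D s * u1 s * u2 s) := by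
        filter_upwards [Ioo_mem_nhds hy.1 hy.2] with z hz
        exact key4 z ⟨hz.1, le_of_lt hz.2⟩
      rw [hev.deriv_eq, hF.deriv]
    rw [heq]
    have hrw : D y * u1 y ^ 2 * (u2 y / u1 y) = D y * u1 y * u2 y := by
      field_simp
    rw [hrw]; ring
  · -- limit of flux at 0
    have hFc : Filter.Tendsto (fun z => Δ * ∫ s in (0:ℝ)..z, D s * u1 s * u2 s)
        (nhdsWithin 0 (Set.Ioi 0)) (nhds 0) := by
      have h := intervalIntegral.integral_hasDerivAt_right
        (hci.intervalIntegrable 0 0)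
        (hci.stronglyMeasurable.stronglyMeasurableAtFilter)
        hci.continuousAt
      have hcont := (h.const_mul Δ).continuousAt.continuousWithinAt (s := Set.Ioi 0)
      have ht : Filter.Tendsto (fun z => Δ * ∫ (x : ℝ) in (0:ℝ)..z, D x * u1 x * u2 x) (nhdsWithin 0 (Set.Ioi 0)) (nhds (Δ * ∫ (x : ℝ) in (0:ℝ)..(0:ℝ), D x * u1 x * u2 x)) := hcont
      simpa [intervalIntegral.integral_same] using ht
    apply hFc.congr'
    filter_upwards [Ioc_mem_nhdsGT_of_mem (Set.mem_Ico.mpr ⟨le_rfl, hH⟩)] with z hz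
    exact (key4 z hz).symm
end
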